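/- Let κ be an infinite cardinal, let (X_α)_{α<κ} be a family of non-zero normed spaces, and let p ∈ [1,∞). Then the ℓ_p-sum (⊕_{α<κ} X_α)_{ℓ_p} is (<κ)-φ_p-octahedral. In particular, ℓ_p(κ) is (<κ)-φ_p-octahedral. -/

import Mathlib

open Set Metric ENNReal

universe u

/-- A set `P` in a normed space is `r`-separated if `‖x - y‖ ≥ r`
for all distinct `x, y ∈ P`. -/
def IsRSeparated {X : Type u} [NormedAddCommGroup X] (r : ℝ) (P : Set X) : Prop :=
  ∀ x ∈ P, ∀ y ∈ P, x ≠ y → r ≤ ‖x - y‖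

/-- A set `P` in a normed space is `r`-dense if every point of the space is within
distance `r` of some point of `P`. -/
def IsRDense {X : Type u} [NormedAddCommGroup X] (r : ℝ) (P : Set X) : Prop :=
  ∀ x : X, ∃ p ∈ P, ‖x - p‖ ≤ r

/-- The simultaneous packing and covering constant `γ(X)`: the infimum of all `r > 0`
for which `X` contains a set that is simultaneously `2`-separated and `r`-dense. -/
noncomputable def packingCovering (X : Type u) [NormedAddCommGroup X] : ℝ :=
  sInf {r : ℝ | 0 < r ∧ ∃ P : Set X, IsRSeparated 2 P ∧ IsRDense r P}

/-- The lattice simultaneous packing and covering constant `γ*(X)`: the infimum of all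
`r > 0` for which `X` contains an additive subgroup that is simultaneously `2`-separated
and `r`-dense. -/
noncomputable def packingCoveringStar (X : Type u) [NormedAddCommGroup X] : ℝ :=
  sInf {r : ℝ | 0 < r ∧ ∃ D : AddSubgroup X,
    IsRSeparated 2 (D : Set X) ∧ IsRDense r (D : Set X)}

/-- The Kottman constant `K(X)`: the supremum of all `r > 0` such that the closed unit
ball of `X` contains an infinite `r`-separated set. -/
noncomputable def kottman (X : Type u) [NormedAddCommGroup X] : ℝ :=
  sSup {r : ℝ | 0 < r ∧ ∃ P : Set X,
    P ⊆ closedBall (0 : X) 1 ∧ P.Infinite ∧ IsRSeparated r P}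

/-- The `κ`-Kottman constant `K(X; κ)`: the supremum of all `r > 0` such that the closed
unit ball of `X` contains an `r`-separated set of cardinality `κ`. -/
noncomputable def kottmanCard (X : Type u) [NormedAddCommGroup X] (κ : Cardinal.{u}) : ℝ :=
  sSup {r : ℝ | 0 < r ∧ ∃ P : Set X,
    P ⊆ closedBall (0 : X) 1 ∧ Cardinal.mk ↥P = κ ∧ IsRSeparated r P}

/-- The density character of a topological space: the smallest cardinality of a dense
subset. -/
noncomputable def densChar (X : Type u) [TopologicalSpace X] : Cardinal.{u} :=
  sInf {c : Cardinal.{u} | ∃ s : Set X, Dense s ∧ Cardinal.mk ↥s = c}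

/-- The modulus of local uniform rotundity `δ_X(x₀, ε)` at a point `x₀`. -/
noncomputable def lurModulus {X : Type u} [NormedAddCommGroup X] (x₀ : X) (ε : ℝ) : ℝ :=
  sInf {d : ℝ | ∃ y : X, ‖y‖ ≤ 1 ∧ ε ≤ ‖x₀ - y‖ ∧ d = 1 - ‖x₀ + y‖ / 2}

/-- `x₀` is a LUR (locally uniformly rotund) point of the unit ball of `X` if it lies on
the unit sphere and `δ_X(x₀, ε) > 0` for every `ε ∈ (0, 2]`. -/
def IsLURPoint {X : Type u} [NormedAddCommGroup X] (x₀ : X) : Prop :=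
  ‖x₀‖ = 1 ∧ ∀ ε : ℝ, 0 < ε → ε ≤ 2 → 0 < lurModulus x₀ ε

/-- The modulus of convexity `δ_X(ε)` of a normed space `X`. -/
noncomputable def convexityModulus (X : Type u) [NormedAddCommGroup X] (ε : ℝ) : ℝ :=
  sInf {d : ℝ | ∃ x y : X, ‖x‖ ≤ 1 ∧ ‖y‖ ≤ 1 ∧ ε ≤ ‖x - y‖ ∧ d = 1 - ‖x + y‖ / 2}

/-- The tangential modulus of convexity `φ_X(t)`, defined through Birkhoff-James
orthogonality: `φ_X(t) = inf {‖x + t v‖ - 1 : x, v ∈ S_X, x ⊥_BJ v}`. -/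
noncomputable def tangentialModulus (X : Type u) [NormedAddCommGroup X]
    [NormedSpace ℝ X] (t : ℝ) : ℝ :=
  sInf {d : ℝ | ∃ x v : X, ‖x‖ = 1 ∧ ‖v‖ = 1 ∧
    (∀ lam : ℝ, ‖x‖ ≤ ‖x + lam • v‖) ∧ d = ‖x + t • v‖ - 1}

/-- `φ : [0,∞) → [0,∞)` is a positive modulus: `φ(0) = 0`, `φ` is continuous at `0`,
`t ↦ φ(t)/t` is non-decreasing on `(0,∞)`, and `φ(t) > 0` for `t > 0`. -/
def IsPositiveModulus (φ : ℝ → ℝ) : Prop :=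
  φ 0 = 0 ∧ Filter.Tendsto φ (nhdsWithin 0 (Set.Ici 0)) (nhds 0) ∧
    (∀ s t : ℝ, 0 < s → s ≤ t → φ s / s ≤ φ t / t) ∧ ∀ t : ℝ, 0 < t → 0 < φ t

/-- The positive modulus `φ_p(t) = (1 + t^p)^(1/p) - 1` (real exponents). -/
noncomputable def phiP (p : ℝ) (t : ℝ) : ℝ := (1 + t ^ p) ^ (1 / p) - 1

/-- A normed space `X` is `(<κ)-octahedral` if for every `ε > 0` and every closed
subspace `Z` of `X` of density character `< κ` there is a unit vector `x` with
`‖z + λ x‖ ≥ (1 - ε)(‖z‖ + |λ|)` for all `z ∈ Z`, `λ ∈ ℝ`. -/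
def KappaOctahedral (κ : Cardinal.{u}) (X : Type u) [NormedAddCommGroup X]
    [NormedSpace ℝ X] : Prop :=
  ∀ ε : ℝ, 0 < ε → ∀ Z : Submodule ℝ X, IsClosed (Z : Set X) → densChar ↥Z < κ →
    ∃ x : X, ‖x‖ = 1 ∧ ∀ z ∈ Z, ∀ lam : ℝ, (1 - ε) * (‖z‖ + |lam|) ≤ ‖z + lam • x‖

/-- A normed space `X` is `(<κ)-φ-octahedral` if for every `ε > 0` and every closed
subspace `Z` of `X` of density character `< κ` there is a unit vector `x` with
`‖z + λ x‖ ≥ (1 - ε)(1 + φ(|λ|))` for all `z` in the unit sphere of `Z` and `λ ∈ ℝ`. -/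
def PhiOctahedral (κ : Cardinal.{u}) (φ : ℝ → ℝ) (X : Type u) [NormedAddCommGroup X]
    [NormedSpace ℝ X] : Prop :=
  ∀ ε : ℝ, 0 < ε → ∀ Z : Submodule ℝ X, IsClosed (Z : Set X) → densChar ↥Z < κ →
    ∃ x : X, ‖x‖ = 1 ∧ ∀ z ∈ Z, ‖z‖ = 1 →
      ∀ lam : ℝ, (1 - ε) * (1 + φ |lam|) ≤ ‖z + lam • x‖


private theorem lp_aux_norm_add_smul_single {ι : Type u} {E : ι → Type u}
    [∀ i, NormedAddCommGroup (E i)] [∀ i, NormedSpace ℝ (E i)] [DecidableEq ι]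
    {p : ℝ} (hp : 0 < p) [Fact (1 ≤ ENNReal.ofReal p)]
    (f : ↥(lp E (ENNReal.ofReal p))) {i₀ : ι} (hf : ⇑f i₀ = 0)
    {u : E i₀} (hu : ‖u‖ = 1) (c : ℝ) :
    ‖f + c • lp.single (ENNReal.ofReal p) i₀ u‖ = (‖f‖ ^ p + |c| ^ p) ^ (1 / p) := by
  let q := ENNReal.ofReal p
  have hqr : q.toReal = p := ENNReal.toReal_ofReal hp.le
  have hq' : 0 < q.toReal := by rw [hqr]; exact hp
  set g := f + c • lp.single q i₀ u with hg
  have hg_apply : ∀ j, j ≠ i₀ → ⇑g j = ⇑f j := by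
    intro j hj
    show ⇑f j + c • ⇑(lp.single q i₀ u) j = ⇑f j
    rw [lp.single_apply_ne q i₀ u hj, smul_zero, add_zero]
  have hg_i₀ : ⇑g i₀ = c • u := by
    show ⇑f i₀ + c • ⇑(lp.single q i₀ u) i₀ = c • u
    simp [lp.single_apply_self, hf]
  have hsumg : Summable fun i => ‖⇑g i‖ ^ p := by
    have h := (lp.memℓp g).summable hq'
    rwa [hqr] at h
  have hsumf : Summable fun i => ‖⇑f i‖ ^ p := by
    have h := (lp.memℓp f).summable hq'
    rwa [hqr] at h
  have hng : ‖g‖ ^ p = ∑' i, ‖⇑g i‖ ^ p := by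
    have h := lp.norm_rpow_eq_tsum hq' g
    rwa [hqr] at h
  have hnf : ‖f‖ ^ p = ∑' i, ‖⇑f i‖ ^ p := by
    have h := lp.norm_rpow_eq_tsum hq' f
    rwa [hqr] at h
  have h1 : ∑' i, ‖⇑g i‖ ^ p =
      ‖⇑g i₀‖ ^ p + ∑' i, (if i = i₀ then 0 else ‖⇑g i‖ ^ p) :=
    hsumg.tsum_eq_add_tsum_ite i₀
  have h2 : ∑' i, ‖⇑f i‖ ^ p =
      ‖⇑f i₀‖ ^ p + ∑' i, (if i = i₀ then 0 else ‖⇑f i‖ ^ p) :=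
    hsumf.tsum_eq_add_tsum_ite i₀
  have htail : ∑' i, (if i = i₀ then 0 else ‖⇑g i‖ ^ p)
      = ∑' i, (if i = i₀ then 0 else ‖⇑f i‖ ^ p) := by
    congr 1
    funext i
    by_cases h : i = i₀
    · simp [h]
    · simp [h, hg_apply i h]
  have hfi₀ : ‖⇑f i₀‖ ^ p = 0 := by rw [hf, norm_zero, Real.zero_rpow hp.ne']
  have hgi₀ : ‖⇑g i₀‖ ^ p = |c| ^ p := by
    rw [hg_i₀, norm_smul, Real.norm_eq_abs, hu, mul_one]
  have hgp : ‖g‖ ^ p = ‖f‖ ^ p + |c| ^ p := by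
    rw [hng, h1, htail, hgi₀, hnf, h2, hfi₀]
    ring
  rw [← hgp, one_div, Real.rpow_rpow_inv (norm_nonneg g) hp.ne']

/-- Let `κ` be an infinite cardinal, `(X_α)_{α<κ}` a family of non-zero
normed spaces and `p ∈ [1, ∞)`. Then the `ℓ_p`-sum `(⊕_{α<κ} X_α)_{ℓ_p}` is
`(<κ)-φ_p`-octahedral. (In particular, `ℓ_p(κ)` is `(<κ)-φ_p`-octahedral.) -/
theorem lpSum_phiP_octahedral {ι : Type u} (κ : Cardinal.{u})
    (hκ : Cardinal.aleph0 ≤ κ) (hι : Cardinal.mk ι = κ)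
    (E : ι → Type u) [∀ i, NormedAddCommGroup (E i)] [∀ i, NormedSpace ℝ (E i)]
    (hE : ∀ i, ∃ x : E i, x ≠ 0)
    (p : ℝ) (hp : 1 ≤ p) [Fact (1 ≤ ENNReal.ofReal p)] :
    PhiOctahedral κ (phiP p) ↥(lp E (ENNReal.ofReal p)) := by
  classical
  set q := ENNReal.ofReal p with hq
  have hp0 : 0 < p := lt_of_lt_of_le one_pos hp
  have hqr : q.toReal = p := ENNReal.toReal_ofReal hp0.le
  have hq' : 0 < q.toReal := by rw [hqr]; exact hp0
  intro ε hε Z hZc hZd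
  -- Step 1: find a coordinate i₀ on which a dense subset of Z vanishes
  obtain ⟨i₀, happrox⟩ : ∃ i₀ : ι, ∀ z ∈ Z, ∀ δ : ℝ, 0 < δ →
      ∃ s ∈ Z, ‖z - s‖ < δ ∧ ⇑s i₀ = 0 := by
    have hmem : densChar ↥Z ∈
        {c : Cardinal.{u} | ∃ s : Set ↥Z, Dense s ∧ Cardinal.mk ↥s = c} :=
      csInf_mem ⟨Cardinal.mk ↥Z, Set.univ, dense_univ, Cardinal.mk_univ⟩
    obtain ⟨S, hSdense, hScard⟩ := hmem
    have hκS : Cardinal.mk ↥S < κ := hScard ▸ hZd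
    rcases lt_or_ge (Cardinal.mk ↥S) Cardinal.aleph0 with hS | hS
    · -- S finite, hence Z = {0}
      have hfinS : S.Finite := Set.finite_coe_iff.mpr (Cardinal.lt_aleph0_iff_finite.mp hS)
      have hSuniv : S = Set.univ := (hfinS.isClosed.closure_eq).symm.trans hSdense.closure_eq
      haveI hZfin : Finite ↥Z := by
        rw [hSuniv] at hfinS
        exact Set.finite_univ_iff.mp hfinS
      have hZ0 : ∀ w : ↥(lp E q), w ∈ Z → w = 0 := by
        intro w hw
        by_contra hw0
        have hinj : Function.Injective
            (fun n : ℕ => (⟨(n : ℝ) • w, Z.smul_mem _ hw⟩ : ↥Z)) := by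
          intro n m hnm
          have h1 : (n : ℝ) • w = (m : ℝ) • w := congrArg Subtype.val hnm
          have h2 : (n : ℝ) = (m : ℝ) := smul_left_injective ℝ hw0 h1
          exact_mod_cast h2
        haveI := Finite.of_injective _ hinj
        exact not_finite ℕ
      have hne : Nonempty ι := by
        refine Cardinal.mk_ne_zero_iff.mp ?_
        rw [hι]
        exact (Cardinal.aleph0_pos.trans_le hκ).ne'
      obtain ⟨i₀⟩ := hne
      refine ⟨i₀, fun z hz δ hδ => ⟨0, Z.zero_mem, ?_, ?_⟩⟩
      · rw [hZ0 z hz]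
        simpa using hδ
      · simp
    · -- S infinite: the union of the supports has cardinality < κ
      set A : Set ι := ⋃ s : ↥S, {i : ι | ⇑((s : ↥Z) : ↥(lp E q)) i ≠ 0} with hA
      have hAcard : Cardinal.mk ↥A < κ := by
        have hSne : Nonempty ↥S :=
          Cardinal.mk_ne_zero_iff.mp (Cardinal.aleph0_pos.trans_le hS).ne'
        have hcount : ∀ s : ↥S,
            Cardinal.mk ↥{i : ι | ⇑((s : ↥Z) : ↥(lp E q)) i ≠ 0} ≤ Cardinal.aleph0 := by
          intro s
          have hsum : Summable fun i => ‖⇑((s : ↥Z) : ↥(lp E q)) i‖ ^ q.toReal :=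
            (lp.memℓp _).summable hq'
          have hcs := hsum.countable_support
          have hsub : {i : ι | ⇑((s : ↥Z) : ↥(lp E q)) i ≠ 0} ⊆
              Function.support fun i => ‖⇑((s : ↥Z) : ↥(lp E q)) i‖ ^ q.toReal := by
            intro i hi
            have : 0 < ‖⇑((s : ↥Z) : ↥(lp E q)) i‖ := norm_pos_iff.mpr hi
            exact (Real.rpow_pos_of_pos this _).ne'
          have : {i : ι | ⇑((s : ↥Z) : ↥(lp E q)) i ≠ 0}.Countable := hcs.mono hsub
          exact Cardinal.mk_le_aleph0_iff.mpr this.to_subtype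
        calc Cardinal.mk ↥A
            ≤ Cardinal.mk ↥S * ⨆ s : ↥S,
              Cardinal.mk ↥{i : ι | ⇑((s : ↥Z) : ↥(lp E q)) i ≠ 0} :=
              Cardinal.mk_iUnion_le _
          _ ≤ Cardinal.mk ↥S * Cardinal.aleph0 :=
              mul_le_mul_right (ciSup_le' hcount) _
          _ = Cardinal.mk ↥S := Cardinal.mul_aleph0_eq hS
          _ < κ := hκS
      have hi₀ : ∃ i₀ : ι, i₀ ∉ A := by
        by_contra h
        push_neg at h
        have hU : A = Set.univ := Set.eq_univ_of_forall h
        rw [hU, Cardinal.mk_univ, hι] at hAcard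
        exact lt_irrefl _ hAcard
      obtain ⟨i₀, hi₀⟩ := hi₀
      refine ⟨i₀, fun z hz δ hδ => ?_⟩
      obtain ⟨s, hsS, hsd⟩ := hSdense.exists_dist_lt (⟨z, hz⟩ : ↥Z) hδ
      refine ⟨(s : ↥(lp E q)), s.2, ?_, ?_⟩
      · rw [← dist_eq_norm]
        rw [Subtype.dist_eq] at hsd
        exact hsd
      · by_contra h0
        exact hi₀ (Set.mem_iUnion.mpr ⟨⟨s, hsS⟩, h0⟩)
  -- Step 2: build the unit vector supported at i₀
  obtain ⟨v, hv⟩ := hE i₀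
  set u : E i₀ := ‖v‖⁻¹ • v with hu_def
  have hu : ‖u‖ = 1 := by
    rw [hu_def, norm_smul, norm_inv, norm_norm, inv_mul_cancel₀ (norm_ne_zero_iff.mpr hv)]
  set x : ↥(lp E q) := lp.single q i₀ u with hx_def
  have hx : ‖x‖ = 1 := by
    have h : ‖lp.single q i₀ u‖ = ‖u‖ := lp.norm_single (ENNReal.ofReal_pos.mpr hp0) i₀ u
    rw [hx_def, h, hu]
  refine ⟨x, hx, ?_⟩
  intro z hz hz1 lam
  have habs : (0:ℝ) ≤ |lam| ^ p := Real.rpow_nonneg (abs_nonneg lam) p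
  have hM0 : (0:ℝ) ≤ (1 + |lam| ^ p) ^ (1 / p) := Real.rpow_nonneg (by linarith) _
  have hM1 : (1:ℝ) ≤ (1 + |lam| ^ p) ^ (1 / p) := Real.one_le_rpow (by linarith) (by positivity)
  have hphi : 1 + phiP p |lam| = (1 + |lam| ^ p) ^ (1 / p) := by
    unfold phiP; ring
  rcases le_or_gt 1 ε with hε1 | hε1
  · -- trivial case
    have : (1 - ε) * (1 + phiP p |lam|) ≤ 0 := by
      rw [hphi]
      exact mul_nonpos_of_nonpos_of_nonneg (by linarith) hM0
    exact this.trans (norm_nonneg _)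
  · obtain ⟨s, hsZ, hsδ, hsi₀⟩ := happrox z hz (ε / 2) (by linarith)
    have hδ1 : (0:ℝ) ≤ 1 - ε / 2 := by linarith
    have hs_norm : 1 - ε / 2 ≤ ‖s‖ := by
      have := norm_sub_norm_le z s
      rw [hz1] at this
      linarith
    have hkey : ‖s + lam • x‖ = (‖s‖ ^ p + |lam| ^ p) ^ (1 / p) := by
      rw [hx_def]
      exact lp_aux_norm_add_smul_single hp0 s hsi₀ hu lam
    have h2 : (1 - ε / 2) * (1 + |lam| ^ p) ^ (1 / p) ≤ (‖s‖ ^ p + |lam| ^ p) ^ (1 / p) := by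
      have e1 : (1 - ε / 2) * (1 + |lam| ^ p) ^ (1 / p)
          = ((1 - ε / 2) ^ p * (1 + |lam| ^ p)) ^ (1 / p) := by
        rw [Real.mul_rpow (Real.rpow_nonneg hδ1 p) (by linarith), one_div,
          Real.rpow_rpow_inv hδ1 hp0.ne']
      rw [e1]
      refine Real.rpow_le_rpow (by positivity) ?_ (by positivity)
      have hle1 : (1 - ε / 2) ^ p ≤ 1 := Real.rpow_le_one hδ1 (by linarith) hp0.le
      have hle2 : (1 - ε / 2) ^ p ≤ ‖s‖ ^ p := Real.rpow_le_rpow hδ1 hs_norm hp0.le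
      have hle3 : (1 - ε / 2) ^ p * |lam| ^ p ≤ |lam| ^ p :=
        mul_le_of_le_one_left habs hle1
      nlinarith
    have h3 : ‖s + lam • x‖ - ‖z - s‖ ≤ ‖z + lam • x‖ := by
      have h4 := norm_sub_norm_le (s + lam • x) (z + lam • x)
      have h5 : (s + lam • x) - (z + lam • x) = s - z := by abel
      rw [h5, norm_sub_rev] at h4
      linarith
    rw [hphi]
    have hεM : ε / 2 ≤ ε / 2 * ((1 + |lam| ^ p) ^ (1 / p)) :=
      le_mul_of_one_le_right (by linarith) hM1
    have hnorm_s : (1 - ε / 2) * ((1 + |lam| ^ p) ^ (1 / p)) ≤ ‖s + lam • x‖ := by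
      rw [hkey]; exact h2
    calc (1 - ε) * ((1 + |lam| ^ p) ^ (1 / p))
        = (1 - ε / 2) * ((1 + |lam| ^ p) ^ (1 / p))
          - ε / 2 * ((1 + |lam| ^ p) ^ (1 / p)) := by ring
      _ ≤ ‖s + lam • x‖ - ε / 2 := by linarith
      _ ≤ ‖s + lam • x‖ - ‖z - s‖ := by linarith
      _ ≤ ‖z + lam • x‖ := h3
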